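/- There exists a radius-1 non-uniform cellular automaton H_θ on alphabet {0,1} over ℤ whose set of equicontinuity points E satisfies: E is nonempty and E is not residual (indeed not dense) in {0,1}^ℤ. -/

import Mathlib

open Function

/-- `f` is a local rule of radius (at most) `r`: it only depends on coordinates in `[-r, r]`. -/
def IsLocalRule {A : Type*} (r : ℕ) (f : (ℤ → A) → A) : Prop :=
  ∀ u v : ℤ → A, (∀ i : ℤ, -(r : ℤ) ≤ i → i ≤ (r : ℤ) → u i = v i) → f u = f v

/-- The global map of the non-uniform cellular automaton with rule distribution `θ`. -/
def nuca {A : Type*} (θ : ℤ → ((ℤ → A) → A)) (c : ℤ → A) : ℤ → A :=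
  fun x => θ x (fun i => c (x + i))

/-- A configuration `θ : ℤ → R` is (spatially) recurrent: every finite pattern
occurs in some other (translated) position. -/
def Recurrent {R : Type*} (θ : ℤ → R) : Prop :=
  ∀ (a : ℤ) (m : ℕ), ∃ k : ℤ, k ≠ 0 ∧ ∀ i : ℕ, i < m → θ (a + k + i) = θ (a + i)

/-- A configuration `θ : ℤ → R` is (spatially) uniformly recurrent: every finite pattern
occurs with bounded gaps. -/
def UnifRecurrent {R : Type*} (θ : ℤ → R) : Prop :=
  ∀ (a : ℤ) (m : ℕ), ∃ n : ℕ, ∀ x : ℤ, ∃ k : ℤ, x ≤ k ∧ k ≤ x + (n : ℤ) ∧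
    ∀ i : ℕ, i < m → θ (k + i) = θ (a + i)

/-- `φ` lies in the orbit closure of `θ` under the shift (combinatorial characterization:
every finite pattern of `φ` occurs in `θ`). -/
def InOrbitClosure {R : Type*} (φ θ : ℤ → R) : Prop :=
  ∀ (a : ℤ) (m : ℕ), ∃ k : ℤ, ∀ i : ℕ, i < m → φ (a + i) = θ (a + k + i)

/-- The radius-`r` neighbourhood of a finite domain `D`. -/
noncomputable def nbhd (r : ℕ) (D : Finset ℤ) : Finset ℤ :=
  D.biUnion (fun x => Finset.Icc (x - (r : ℤ)) (x + (r : ℤ)))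

/-- A NUCA (with radius-`r` rules) is balanced: every pattern on a finite domain `D` has
exactly `|Σ|^(|N(D)|-|D|)` preimage patterns on the neighbourhood `N(D)`. -/
def NucaBalanced {A : Type*} [Fintype A] (r : ℕ) (θ : ℤ → ((ℤ → A) → A)) : Prop :=
  ∀ (D : Finset ℤ) (p : ℤ → A),
    Nat.card {q : { y : ℤ // y ∈ nbhd r D } → A //
      ∀ c : ℤ → A, (∀ i : { y : ℤ // y ∈ nbhd r D }, c i.1 = q i) →
        ∀ x ∈ D, nuca θ c x = p x} =
      Fintype.card A ^ ((nbhd r D).card - D.card)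

/-- `c` is an equicontinuity point of the NUCA `θ`. -/
def EqPt {A : Type*} (θ : ℤ → ((ℤ → A) → A)) (c : ℤ → A) : Prop :=
  ∀ E : Finset ℤ, ∃ D : Finset ℤ, ∀ e : ℤ → A, (∀ x ∈ D, e x = c x) →
    ∀ n : ℕ, 1 ≤ n → ∀ x ∈ E, (nuca θ)^[n] e x = (nuca θ)^[n] c x

/-- The NUCA `θ` is sensitive to initial conditions. -/
def Sensitive {A : Type*} (θ : ℤ → ((ℤ → A) → A)) : Prop :=
  ∃ E : Finset ℤ, ∀ c : ℤ → A, ∀ D : Finset ℤ, ∃ e : ℤ → A,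
    (∀ x ∈ D, e x = c x) ∧ ∃ n : ℕ, 1 ≤ n ∧ ∃ x ∈ E, (nuca θ)^[n] e x ≠ (nuca θ)^[n] c x


/-- The leftward traffic rule τ (with 1 = true, 0 = false). -/
def tau : (ℤ → Bool) → Bool := fun u =>
  if u (-1) = false ∧ u 0 = true then false
  else if u 0 = false ∧ u 1 = true then true
  else u 0

/-- The identity rule. -/
def idRule : (ℤ → Bool) → Bool := fun u => u 0

/-- Traffic on the positive cells, identity on the nonpositive cells. -/
def θtraffic : ℤ → ((ℤ → Bool) → Bool) := fun x => if 0 < x then tau else idRule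

abbrev Orb (d : ℤ → Bool) (t : ℕ) : ℤ → Bool := (nuca θtraffic)^[t] d

lemma tau_local : IsLocalRule 1 tau := by
  intro u v h
  unfold tau
  rw [h (-1) (by norm_num) (by norm_num), h 0 (by norm_num) (by norm_num),
      h 1 (by norm_num) (by norm_num)]

lemma id_local : IsLocalRule 1 idRule := by
  intro u v h
  exact h 0 (by norm_num) (by norm_num)

lemma theta_local : ∀ x, IsLocalRule 1 (θtraffic x) := by
  intro x
  unfold θtraffic
  split
  · exact tau_local
  · exact id_local

lemma theta_range : (Set.range θtraffic).Finite := by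
  apply Set.Finite.subset (Set.toFinite {tau, idRule})
  rintro _ ⟨x, rfl⟩
  unfold θtraffic
  split <;> simp

lemma step_neg (d : ℤ → Bool) (x : ℤ) (hx : x ≤ 0) : nuca θtraffic d x = d x := by
  unfold nuca θtraffic
  rw [if_neg (by omega)]
  show d (x + 0) = d x
  rw [add_zero]

lemma orb_neg (d : ℤ → Bool) (t : ℕ) (x : ℤ) (hx : x ≤ 0) : Orb d t x = d x := by
  induction t with
  | zero => rfl
  | succ t ih => rw [Orb, Function.iterate_succ_apply', step_neg _ _ hx]; exact ih

lemma step_pos (d : ℤ → Bool) (x : ℤ) (hx : 0 < x) :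
    nuca θtraffic d x = ((d (x-1) && d x) || (!(d x) && d (x+1))) := by
  unfold nuca θtraffic
  rw [if_pos hx]
  show tau (fun i => d (x + i)) = _
  unfold tau
  have h1 : x + (-1) = x - 1 := by ring
  simp only [h1, add_zero]
  cases d (x-1) <;> cases d x <;> cases d (x+1) <;> simp

lemma orb_succ (d : ℤ → Bool) (t : ℕ) : Orb d (t+1) = nuca θtraffic (Orb d t) :=
  Function.iterate_succ_apply' _ _ _

-- all ones is fixed
lemma allones_orb (t : ℕ) (y : ℤ) : Orb (fun _ => true) t y = true := by
  induction t generalizing y with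
  | zero => rfl
  | succ t ih =>
    rw [orb_succ]
    rcases le_or_gt y 0 with h | h
    · rw [step_neg _ _ h]; exact ih y
    · rw [step_pos _ _ h, ih (y-1), ih y, ih (y+1)]; rfl

-- box of ones next to frozen cell 0 persists
lemma ones_box (d : ℤ → Bool) (M : ℤ) (h : ∀ x : ℤ, 0 ≤ x → x ≤ M → d x = true) :
    ∀ k : ℕ, (k : ℤ) ≤ M → ∀ t, Orb d t (k : ℤ) = true := by
  intro k
  induction k with
  | zero =>
    intro hk t
    rw [Nat.cast_zero, orb_neg d t 0 le_rfl]
    exact h 0 le_rfl (by exact_mod_cast hk)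
  | succ k ih =>
    intro hk t
    have hk' : (k : ℤ) ≤ M := by push_cast at hk ⊢; omega
    induction t with
    | zero => exact h _ (by positivity) (by exact_mod_cast hk)
    | succ t iht =>
      rw [orb_succ]
      have hpos : (0:ℤ) < ((k+1 : ℕ) : ℤ) := by push_cast; omega
      rw [step_pos _ _ hpos]
      have e1 : ((k+1:ℕ):ℤ) - 1 = (k:ℤ) := by push_cast; ring
      rw [e1, ih hk' t, iht]
      simp

lemma eqpt_ones : EqPt θtraffic (fun _ => true) := by
  intro E
  have hne : (insert (0:ℤ) E).Nonempty := ⟨0, Finset.mem_insert_self _ _⟩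
  set M := (insert (0:ℤ) E).max' hne with hM
  refine ⟨E ∪ Finset.Icc 0 M, ?_⟩
  intro e he n _ x hx
  show Orb e n x = Orb (fun _ => true) n x
  have hxM : x ≤ M := Finset.le_max' _ x (Finset.mem_insert_of_mem hx)
  rcases le_or_gt x 0 with h | h
  · rw [orb_neg e n x h, orb_neg _ n x h]
    exact he x (Finset.mem_union_left _ hx)
  · have hbox : ∀ z : ℤ, 0 ≤ z → z ≤ M → e z = true := by
      intro z h1 h2
      exact he z (Finset.mem_union_right _ (Finset.mem_Icc.mpr ⟨h1, h2⟩))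
    have h1 : Orb e n x = true := by
      have := ones_box e M hbox x.toNat (by omega) n
      rwa [Int.toNat_of_nonneg (by omega)] at this
    have h2 : Orb (fun _ => true) n x = true := allones_orb n x
    rw [h1, h2]

-- light cone
lemma light_cone (d d' : ℤ → Bool) : ∀ (t : ℕ) (y : ℤ),
    (∀ z, y - t ≤ z → z ≤ y + t → d z = d' z) → Orb d t y = Orb d' t y := by
  intro t
  induction t with
  | zero => intro y h; exact h y (by omega) (by omega)
  | succ t ih =>
    intro y h
    rw [orb_succ, orb_succ]
    show θtraffic y (fun i => Orb d t (y + i)) = θtraffic y (fun i => Orb d' t (y + i))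
    apply theta_local y
    intro i h1 h2
    apply ih
    intro z hz1 hz2
    apply h z (by push_cast at h1 h2; omega) (by push_cast at h1 h2; omega)

-- all false on [1,∞) stays false there
lemma allfalse_right (d : ℤ → Bool) (h : ∀ x : ℤ, 1 ≤ x → d x = false) :
    ∀ (t : ℕ) (x : ℤ), 1 ≤ x → Orb d t x = false := by
  intro t
  induction t with
  | zero => exact h
  | succ t ih =>
    intro x hx
    rw [orb_succ, step_pos _ _ (by omega), ih x hx, ih (x+1) (by omega)]
    simp

-- a leftmost car is absorbed at cell 1
lemma car_absorb (d : ℤ → Bool) : ∀ (q : ℕ) (t : ℕ),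
    Orb d t (1 + (q : ℤ)) = true → (∀ j : ℕ, j < q → Orb d t (1 + (j : ℤ)) = false) →
    ∃ t', t ≤ t' ∧ Orb d t' 1 = true := by
  intro q
  induction q with
  | zero => intro t h _; exact ⟨t, le_rfl, by simpa using h⟩
  | succ q ih =>
    intro t hcar hmin
    have hq : Orb d (t+1) (1 + (q:ℤ)) = true := by
      rw [orb_succ, step_pos _ _ (by omega)]
      have hb : Orb d t (1 + (q:ℤ)) = false := hmin q (by omega)
      have hc : Orb d t (1 + (q:ℤ) + 1) = true := by
        have : (1 : ℤ) + (q:ℤ) + 1 = 1 + ((q+1 : ℕ) : ℤ) := by push_cast; ring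
        rw [this]; exact hcar
      rw [hb, hc]; simp
    have hm : ∀ j : ℕ, j < q → Orb d (t+1) (1 + (j:ℤ)) = false := by
      intro j hj
      rw [orb_succ, step_pos _ _ (by omega)]
      have hb : Orb d t (1 + (j:ℤ)) = false := hmin j (by omega)
      have hc : Orb d t (1 + (j:ℤ) + 1) = false := by
        have : (1 : ℤ) + (j:ℤ) + 1 = 1 + ((j+1 : ℕ) : ℤ) := by push_cast; ring
        rw [this]; exact hmin (j+1) (by omega)
      rw [hb, hc]; simp
    obtain ⟨t', ht', h1⟩ := ih (t+1) hq hm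
    exact ⟨t', by omega, h1⟩


noncomputable def Psi (R : ℤ) (d : ℤ → Bool) : ℕ :=
  ∑ y ∈ Finset.Icc (1:ℤ) R, (if d y = true then y.toNat else 0)

lemma psi_decrease (R : ℤ) (d : ℤ → Bool) (h0 : d 0 = false)
    (hR : ∀ x : ℤ, R < x → d x = false)
    (hcar : ∃ y : ℤ, 1 ≤ y ∧ y ≤ R ∧ d y = true) :
    Psi R (nuca θtraffic d) < Psi R d := by
  set d' := nuca θtraffic d with hd'
  -- minimal car
  set F := (Finset.Icc (1:ℤ) R).filter (fun y => d y = true) with hF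
  have hFne : F.Nonempty := by
    obtain ⟨y, h1, h2, h3⟩ := hcar
    exact ⟨y, Finset.mem_filter.mpr ⟨Finset.mem_Icc.mpr ⟨h1, h2⟩, h3⟩⟩
  set y₀ := F.min' hFne with hy₀
  have hy₀F : y₀ ∈ F := Finset.min'_mem _ _
  have hy₀Icc : y₀ ∈ Finset.Icc (1:ℤ) R := (Finset.mem_filter.mp hy₀F).1
  have hy₀1 : 1 ≤ y₀ := (Finset.mem_Icc.mp hy₀Icc).1
  have hy₀R : y₀ ≤ R := (Finset.mem_Icc.mp hy₀Icc).2
  have hy₀d : d y₀ = true := (Finset.mem_filter.mp hy₀F).2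
  have hy₀min : ∀ y, 1 ≤ y → y < y₀ → d y = false := by
    intro y h1 h2
    by_contra hc
    have : y ∈ F := Finset.mem_filter.mpr
      ⟨Finset.mem_Icc.mpr ⟨h1, by omega⟩, by simpa using hc⟩
    have := Finset.min'_le F y this
    omega
  have hprev : d (y₀ - 1) = false := by
    rcases eq_or_lt_of_le hy₀1 with h | h
    · rw [← h]; simpa using h0
    · exact hy₀min _ (by omega) (by omega)
  -- step form on the interval
  have hstep : ∀ y ∈ Finset.Icc (1:ℤ) R,
      (if d' y = true then y.toNat else 0) =
      (if (d (y-1) && d y) = true then y.toNat else 0) +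
      (if (!(d y) && d (y+1)) = true then y.toNat else 0) := by
    intro y hy
    rw [Finset.mem_Icc] at hy
    rw [hd', step_pos d y (by omega)]
    cases d (y-1) <;> cases d y <;> cases d (y+1) <;> simp
  -- second summand reindex
  have hre : ∑ y ∈ Finset.Icc (1:ℤ) R, (if (!(d y) && d (y+1)) = true then y.toNat else 0)
      = ∑ z ∈ Finset.Icc (2:ℤ) (R+1), (if (!(d (z-1)) && d z) = true then (z-1).toNat else 0) := by
    apply Finset.sum_nbij' (fun y => y + 1) (fun z => z - 1)
    · intro a ha; rw [Finset.mem_Icc] at *; omega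
    · intro a ha; rw [Finset.mem_Icc] at *; omega
    · intro a _; ring
    · intro a _; ring
    · intro a _; simp
  have hk1 : (if (!(d (1-1:ℤ)) && d 1) = true then ((1:ℤ)-1).toNat else 0) = 0 := by
    simp
  have hsub1 : ∑ z ∈ Finset.Icc (2:ℤ) (R+1), (if (!(d (z-1)) && d z) = true then (z-1).toNat else 0)
      = ∑ z ∈ Finset.Icc (1:ℤ) (R+1), (if (!(d (z-1)) && d z) = true then (z-1).toNat else 0) := by
    apply Finset.sum_subset
    · intro z hz; rw [Finset.mem_Icc] at *; omega
    · intro z hz hz2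
      rw [Finset.mem_Icc] at *
      have : z = 1 := by omega
      subst this
      exact hk1
  have hsub2 : ∑ z ∈ Finset.Icc (1:ℤ) R, (if (!(d (z-1)) && d z) = true then (z-1).toNat else 0)
      = ∑ z ∈ Finset.Icc (1:ℤ) (R+1), (if (!(d (z-1)) && d z) = true then (z-1).toNat else 0) := by
    apply Finset.sum_subset
    · intro z hz; rw [Finset.mem_Icc] at *; omega
    · intro z hz hz2
      rw [Finset.mem_Icc] at *
      have : z = R + 1 := by omega
      subst this
      rw [hR (R+1) (by omega)]
      simp
  have key : Psi R d' = ∑ y ∈ Finset.Icc (1:ℤ) R,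
      ((if (d (y-1) && d y) = true then y.toNat else 0) +
       (if (!(d (y-1)) && d y) = true then (y-1).toNat else 0)) := by
    rw [Psi, Finset.sum_congr rfl hstep, Finset.sum_add_distrib, hre, hsub1, ← hsub2,
        ← Finset.sum_add_distrib]
  rw [key, Psi]
  apply Finset.sum_lt_sum
  · intro y hy
    rw [Finset.mem_Icc] at hy
    cases hdy : d y
    · simp
    · cases hdp : d (y - 1) <;> simp <;> omega
  · refine ⟨y₀, hy₀Icc, ?_⟩
    rw [hy₀d, hprev]
    simp
    omega

lemma dies (R : ℤ) (hR1 : 1 ≤ R) : ∀ (N : ℕ) (d : ℤ → Bool), d 0 = false →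
    (∀ x : ℤ, R < x → d x = false) → Psi R d ≤ N →
    ∃ T : ℕ, ∀ t, T ≤ t → ∀ x : ℤ, 1 ≤ x → Orb d t x = false := by
  intro N
  induction N with
  | zero =>
    intro d h0 hR hPsi
    refine ⟨0, fun t _ x hx => allfalse_right d ?_ t x hx⟩
    intro x hx1
    by_contra hc
    rcases le_or_gt x R with hxR | hxR
    · have hterm : x.toNat ≤ Psi R d := by
        have hmem : x ∈ Finset.Icc (1:ℤ) R := Finset.mem_Icc.mpr ⟨hx1, hxR⟩
        calc x.toNat = (if d x = true then x.toNat else 0) := by simp at hc; rw [hc]; simp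
        _ ≤ Psi R d := by rw [Psi]; exact Finset.single_le_sum (f := fun y => if d y = true then y.toNat else 0) (fun _ _ => Nat.zero_le _) hmem
      omega
    · exact hc (hR x hxR)
  | succ N ih =>
    intro d h0 hR hPsi
    by_cases hcar : ∃ y : ℤ, 1 ≤ y ∧ y ≤ R ∧ d y = true
    · set d' := nuca θtraffic d with hd'
      have h0' : d' 0 = false := by rw [hd', step_neg d 0 le_rfl]; exact h0
      have hR' : ∀ x : ℤ, R < x → d' x = false := by
        intro x hx
        rw [hd', step_pos d x (by omega), hR x hx, hR (x+1) (by omega)]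
        simp
      have hlt : Psi R d' < Psi R d := psi_decrease R d h0 hR hcar
      obtain ⟨T, hT⟩ := ih d' h0' hR' (by omega)
      refine ⟨T + 1, fun t ht x hx => ?_⟩
      obtain ⟨s, rfl⟩ : ∃ s, t = s + 1 := ⟨t - 1, by omega⟩
      have : Orb d (s+1) = Orb d' s := by
        rw [Orb, Orb, hd', Function.iterate_succ_apply]
      rw [this]
      exact hT s (by omega) x hx
    · push_neg at hcar
      refine ⟨0, fun t _ x hx => allfalse_right d ?_ t x hx⟩
      intro z hz
      rcases le_or_gt z R with h | h
      · by_contra hc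
        exact absurd (hcar z hz h) (by simpa using hc)
      · exact hR z h

lemma sens (c : ℤ → Bool) (hc : c 0 = false) : ¬ EqPt θtraffic c := by
  intro h
  obtain ⟨D, hD⟩ := h {1}
  have hne : (insert (1:ℤ) D).Nonempty := ⟨1, Finset.mem_insert_self _ _⟩
  set R := (insert (1:ℤ) D).max' hne with hRdef
  have hR1 : 1 ≤ R := Finset.le_max' _ 1 (Finset.mem_insert_self _ _)
  have hDR : ∀ x ∈ D, x ≤ R := fun x hx => Finset.le_max' _ x (Finset.mem_insert_of_mem hx)
  set e₁ : ℤ → Bool := fun x => if x ∈ D then c x else false with he₁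
  set e₂ : ℤ → Bool := fun x => if x ∈ D then c x else if R + 1 ≤ x then true else false with he₂
  have hag1 : ∀ x ∈ D, e₁ x = c x := fun x hx => by simp [he₁, hx]
  have hag2 : ∀ x ∈ D, e₂ x = c x := fun x hx => by simp [he₂, hx]
  have h1c := hD e₁ hag1
  have h2c := hD e₂ hag2
  have he₁0 : e₁ 0 = false := by
    by_cases h : (0:ℤ) ∈ D <;> simp [he₁, h, hc]
  have he₁R : ∀ x : ℤ, R < x → e₁ x = false := by
    intro x hx
    have : x ∉ D := fun hmem => by have := hDR x hmem; omega
    simp [he₁, this]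
  obtain ⟨T, hT⟩ := dies R hR1 (Psi R e₁) e₁ he₁0 he₁R le_rfl
  set t₀ := T + 1 with ht₀
  -- e₂ always has a car at position R + 1 + t₀
  have hcar : Orb e₂ t₀ (R + 1 + (t₀:ℤ)) = true := by
    have := light_cone e₂ (fun _ => true) t₀ (R + 1 + (t₀:ℤ)) ?_
    · rw [this]; exact allones_orb _ _
    · intro z hz1 hz2
      have hzD : z ∉ D := fun hmem => by have := hDR z hmem; omega
      simp [he₂, hzD]
      omega
  -- leftmost car
  set S := (Finset.Icc (1:ℤ) (R + 1 + (t₀:ℤ))).filter (fun y => Orb e₂ t₀ y = true) with hS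
  have hSne : S.Nonempty :=
    ⟨R + 1 + (t₀:ℤ), Finset.mem_filter.mpr ⟨Finset.mem_Icc.mpr ⟨by omega, le_rfl⟩, hcar⟩⟩
  set y₀ := S.min' hSne with hy₀
  have hy₀S : y₀ ∈ S := Finset.min'_mem _ _
  have hy₀Icc := (Finset.mem_filter.mp hy₀S).1
  rw [Finset.mem_Icc] at hy₀Icc
  have hy₀car : Orb e₂ t₀ y₀ = true := (Finset.mem_filter.mp hy₀S).2
  have hq : ((y₀ - 1).toNat : ℤ) = y₀ - 1 := Int.toNat_of_nonneg (by omega)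
  have harg1 : Orb e₂ t₀ (1 + ((y₀-1).toNat : ℤ)) = true := by
    have h' : (1:ℤ) + ((y₀-1).toNat : ℤ) = y₀ := by omega
    rw [h']; exact hy₀car
  have harg2 : ∀ j : ℕ, j < (y₀-1).toNat → Orb e₂ t₀ (1 + (j:ℤ)) = false := by
    intro j hj
    by_contra hcj
    have hjlt : (1:ℤ) + (j:ℤ) < y₀ := by omega
    have hmem : (1:ℤ) + (j:ℤ) ∈ S := by
      refine Finset.mem_filter.mpr ⟨Finset.mem_Icc.mpr ⟨by omega, by omega⟩, ?_⟩
      simpa using hcj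
    have := Finset.min'_le S _ hmem
    omega
  obtain ⟨t', ht', hcar1⟩ := car_absorb e₂ ((y₀-1).toNat) t₀ harg1 harg2
  have hA : Orb e₁ t' 1 = Orb c t' 1 := h1c t' (by omega) 1 (Finset.mem_singleton_self 1)
  have hB : Orb e₂ t' 1 = Orb c t' 1 := h2c t' (by omega) 1 (Finset.mem_singleton_self 1)
  have hdead : Orb e₁ t' 1 = false := hT t' (by omega) 1 le_rfl
  rw [hcar1, ← hA, hdead] at hB
  exact absurd hB (by simp)

lemma not_dense_eqpt : ¬ Dense {c : ℤ → Bool | EqPt θtraffic c} := by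
  intro hd
  have hopen : IsOpen {c : ℤ → Bool | c 0 = false} := by
    have : {c : ℤ → Bool | c 0 = false} = (fun c : ℤ → Bool => c 0) ⁻¹' ({false} : Set Bool) := rfl
    rw [this]
    have hcont : Continuous (fun c : ℤ → Bool => c 0) := continuous_apply 0
    exact hcont.isOpen_preimage ({false} : Set Bool) (isOpen_discrete _)
  obtain ⟨c, hcE, hc0⟩ := hd.exists_mem_open hopen ⟨fun _ => false, rfl⟩
  exact sens c hc0 hcE

/-- There is a radius-1 NUCA on a two-letter alphabet whose set of equicontinuity
points is nonempty and not residual (indeed not dense). -/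
theorem stmt_9 :
    ∃ θ : ℤ → ((ℤ → Bool) → Bool),
      (∀ x, IsLocalRule 1 (θ x)) ∧ (Set.range θ).Finite ∧
      {c : ℤ → Bool | EqPt θ c}.Nonempty ∧
      ¬ Dense {c : ℤ → Bool | EqPt θ c} ∧
      {c : ℤ → Bool | EqPt θ c} ∉ residual (ℤ → Bool) := by
  refine ⟨θtraffic, theta_local, theta_range, ⟨fun _ => true, eqpt_ones⟩, not_dense_eqpt, ?_⟩
  intro hres
  exact not_dense_eqpt (dense_of_mem_residual hres)
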